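/- Let X be a zero-dimensional metric space. If C_k(X,2) (compact-open topology) is normal, then the derived set X' is separable. -/

import Mathlib

open Topology Set

namespace Statement12Aux

variable {X : Type*} [MetricSpace X]





lemma isSeparable_of_countable_separated {s : Set X}
    (h : ∀ ε : ℝ, 0 < ε → ∀ D : Set X, D ⊆ s →
      (∀ d ∈ D, ∀ d' ∈ D, d ≠ d' → ε ≤ dist d d') → D.Countable) :
    TopologicalSpace.IsSeparable s := by
  have key : ∀ n : ℕ, ∃ T : Set X, T ⊆ s ∧
      (∀ d ∈ T, ∀ d' ∈ T, d ≠ d' → (1:ℝ)/(n+1) ≤ dist d d') ∧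
      (∀ x ∈ s, ∃ y ∈ T, dist x y < 1/(n+1)) := by
    intro n
    set S : Set (Set X) :=
      {T | T ⊆ s ∧ ∀ d ∈ T, ∀ d' ∈ T, d ≠ d' → (1:ℝ)/(n+1) ≤ dist d d'} with hS
    obtain ⟨m, hm⟩ := zorn_subset S (by
      intro c hc hchain
      refine ⟨⋃₀ c, ⟨?_, ?_⟩, fun t ht => subset_sUnion_of_mem ht⟩
      · exact sUnion_subset fun t ht => (hc ht).1
      · rintro d ⟨t, ht, hd⟩ d' ⟨t', ht', hd'⟩ hne
        rcases hchain.total ht ht' with hsub | hsub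
        · exact (hc ht').2 d (hsub hd) d' hd' hne
        · exact (hc ht).2 d hd d' (hsub hd') hne)
    refine ⟨m, hm.prop.1, hm.prop.2, ?_⟩
    intro x hx
    by_contra hbad
    push_neg at hbad
    have hxm : insert x m ∈ S := by
      refine ⟨insert_subset hx hm.prop.1, ?_⟩
      rintro d (rfl | hd) d' (rfl | hd') hne
      · exact absurd rfl hne
      · exact hbad d' hd'
      · rw [dist_comm]; exact hbad d hd
      · exact hm.prop.2 d hd d' hd' hne
    have hxmem : x ∈ m := hm.2 hxm (subset_insert _ _) (mem_insert _ _)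
    have := hbad x hxmem
    simp only [dist_self] at this
    have hpos : (0:ℝ) < 1/(n+1) := by positivity
    linarith
  choose T hTs hTsep hTnet using key
  refine ⟨⋃ n, T n, countable_iUnion (fun n => h _ (by positivity) _ (hTs n) (hTsep n)), ?_⟩
  intro x hx
  rw [Metric.mem_closure_iff]
  intro δ hδ
  obtain ⟨n, hn⟩ := exists_nat_one_div_lt (K := ℝ) hδ
  obtain ⟨y, hy, hxy⟩ := hTnet n x hx
  exact ⟨y, mem_iUnion.2 ⟨n, hy⟩, hxy.trans hn⟩

/-- A "fan" of clopen sets converging to each point of `D`. -/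
structure Fan (D : Set X) (ε : ℝ) where
  x : D → ℕ → X
  V : D → ℕ → Set X
  clopen : ∀ d n, IsClopen (V d n)
  mem : ∀ d n, x d n ∈ V d n
  subset : ∀ d n, V d n ⊆ Metric.ball (d:X) (ε/4)
  not_mem : ∀ d n, (d:X) ∉ V d n
  disj : ∀ d m n, m ≠ n → Disjoint (V d m) (V d n)
  tendsto : ∀ d, Filter.Tendsto (fun n => x d n) Filter.atTop (𝓝 (d:X))

lemma exists_fan {D : Set X} {ε : ℝ}
    (hzd : TopologicalSpace.IsTopologicalBasis {s : Set X | IsClopen s})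
    (hD : ∀ d ∈ D, (𝓝[≠] d).NeBot) (hε : 0 < ε) :
    Nonempty (Fan D ε) := by
  have main : ∀ d : D, ∃ (x : ℕ → X) (V : ℕ → Set X),
      (∀ n, IsClopen (V n)) ∧ (∀ n, x n ∈ V n) ∧
      (∀ n, V n ⊆ Metric.ball (d:X) (ε/4)) ∧ (∀ n, (d:X) ∉ V n) ∧
      (∀ m n, m ≠ n → Disjoint (V m) (V n)) ∧
      Filter.Tendsto x Filter.atTop (𝓝 (d:X)) := by
    rintro ⟨d, hd⟩
    haveI := hD d hd
    have step : ∀ r : ℝ, 0 < r → ∃ y : X, y ≠ d ∧ dist y d < r := by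
      intro r hr
      have : Metric.ball d r ∩ {d}ᶜ ∈ 𝓝[≠] d :=
        Filter.inter_mem (mem_nhdsWithin_of_mem_nhds (Metric.ball_mem_nhds d hr))
          self_mem_nhdsWithin
      obtain ⟨y, hy1, hy2⟩ := Filter.nonempty_of_mem this
      exact ⟨y, hy2, Metric.mem_ball.1 hy1⟩
    -- choice function
    have hw : ∀ r : ℝ, ∃ y : X, 0 < r → y ≠ d ∧ dist y d < r := by
      intro r
      by_cases hr : 0 < r
      · obtain ⟨y, hy⟩ := step r hr; exact ⟨y, fun _ => hy⟩
      · exact ⟨d, fun h => absurd h hr⟩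
    choose w hw using hw
    -- the recursive sequence
    set u : ℕ → X := fun n => Nat.rec (w (ε/8)) (fun _ y => w (dist y d / 4)) n with hu
    have hu0 : u 0 = w (ε/8) := rfl
    have husucc : ∀ n, u (n+1) = w (dist (u n) d / 4) := fun n => rfl
    have hQ : ∀ n, u n ≠ d ∧ dist (u n) d < ε/8 := by
      intro n
      induction n with
      | zero => exact hw (ε/8) (by linarith)
      | succ n ih =>
        have hpos : 0 < dist (u n) d := dist_pos.2 ih.1
        have := hw (dist (u n) d / 4) (by linarith)
        rw [← husucc n] at this
        exact ⟨this.1, by linarith [this.2, ih.2]⟩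
    have hchain : ∀ n, dist (u (n+1)) d < dist (u n) d / 4 := by
      intro n
      have hpos : 0 < dist (u n) d := dist_pos.2 (hQ n).1
      have := hw (dist (u n) d / 4) (by linarith)
      rw [← husucc n] at this
      exact this.2
    have hpos : ∀ n, 0 < dist (u n) d := fun n => dist_pos.2 (hQ n).1
    -- monotone decay
    have hanti : ∀ m n, m ≤ n → dist (u n) d ≤ dist (u m) d := by
      intro m n hmn
      induction n with
      | zero =>
        have hm0 : m = 0 := Nat.le_zero.mp hmn
        subst hm0; exact le_refl _
      | succ n ih =>
        rcases Nat.lt_or_ge m (n+1) with hlt | hge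
        · have := ih (by omega)
          have := hchain n
          have := hpos n
          linarith
        · have : m = n + 1 := by omega
          subst this; exact le_refl _
    have hquarter : ∀ m n, m < n → dist (u n) d ≤ dist (u m) d / 4 := by
      intro m n hmn
      calc dist (u n) d ≤ dist (u (m+1)) d := hanti (m+1) n hmn
        _ ≤ dist (u m) d / 4 := le_of_lt (hchain m)
    have hgeo : ∀ n, dist (u n) d < ε/8 * (1/4:ℝ)^n := by
      intro n
      induction n with
      | zero => simpa using (hQ 0).2
      | succ n ih =>
        have := hchain n
        have : dist (u (n+1)) d < (ε/8 * (1/4:ℝ)^n)/4 := by linarith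
        calc dist (u (n+1)) d < (ε/8 * (1/4:ℝ)^n)/4 := this
          _ = ε/8 * (1/4:ℝ)^(n+1) := by ring
    have htend : Filter.Tendsto u Filter.atTop (𝓝 d) := by
      rw [tendsto_iff_dist_tendsto_zero]
      refine squeeze_zero (fun n => dist_nonneg) (fun n => le_of_lt (hgeo n)) ?_
      have : Filter.Tendsto (fun n : ℕ => (1/4:ℝ)^n) Filter.atTop (𝓝 0) :=
        tendsto_pow_atTop_nhds_zero_of_lt_one (by norm_num) (by norm_num)
      simpa using this.const_mul (ε/8)
    -- clopen sets
    have hV : ∀ n, ∃ V : Set X, IsClopen V ∧ u n ∈ V ∧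
        V ⊆ Metric.ball (u n) (dist (u n) d / 4) := by
      intro n
      obtain ⟨V, hV1, hV2, hV3⟩ := hzd.exists_subset_of_mem_open
        (show u n ∈ Metric.ball (u n) (dist (u n) d / 4) from
          Metric.mem_ball_self (by linarith [hpos n])) Metric.isOpen_ball
      exact ⟨V, hV1, hV2, hV3⟩
    choose V hVclopen hVmem hVsub using hV
    refine ⟨u, V, hVclopen, hVmem, ?_, ?_, ?_, htend⟩
    · intro n y hy
      have h1 : dist y (u n) < dist (u n) d / 4 := Metric.mem_ball.1 (hVsub n hy)
      have h2 : dist (u n) d < ε/8 := (hQ n).2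
      have := dist_triangle y (u n) d
      simp only [Metric.mem_ball]
      linarith
    · intro n hmem
      have : dist d (u n) < dist (u n) d / 4 := Metric.mem_ball.1 (hVsub n hmem)
      rw [dist_comm] at this
      linarith [hpos n]
    · have key : ∀ m n, m < n → Disjoint (V m) (V n) := by
        intro m n h
        rw [Set.disjoint_left]
        intro y hy1 hy2
        have e1 := Metric.mem_ball.1 (hVsub m hy1)
        have e2 := Metric.mem_ball.1 (hVsub n hy2)
        have hq := hquarter m n h
        have t1 := dist_triangle (u m) y d
        have t2 := dist_triangle y (u n) d
        rw [dist_comm (u m) y] at t1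
        have hpm := hpos m
        linarith
      intro m n hmn
      rcases Ne.lt_or_gt hmn with h | h
      · exact key m n h
      · exact (key n m h).symm
  choose xf Vf h1 h2 h3 h4 h5 h6 using main
  exact ⟨⟨xf, Vf, h1, h2, h3, h4, h5, h6⟩⟩






namespace Fan

variable {D : Set X} {ε : ℝ} (F : Fan D ε)

def Sep (D : Set X) (ε : ℝ) : Prop :=
  0 < ε ∧ ∀ d ∈ D, ∀ d' ∈ D, d ≠ d' → ε ≤ dist d d'

/-- the union of the first `f d` pieces of each fan -/
def U (f : D → ℕ) : Set X := ⋃ (d : D) (n : ℕ) (_ : n < f d), F.V d n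

lemma mem_U {f : D → ℕ} {y : X} :
    y ∈ F.U f ↔ ∃ (d : D) (n : ℕ), n < f d ∧ y ∈ F.V d n := by
  simp [U, mem_iUnion]

lemma unique (hsep : Sep D ε) {d d' : D} {n n' : ℕ} {y : X}
    (h : y ∈ F.V d n) (h' : y ∈ F.V d' n') : d = d' ∧ n = n' := by
  obtain ⟨hε, hs⟩ := hsep
  have h1 : dist y (d:X) < ε/4 := Metric.mem_ball.1 (F.subset d n h)
  have h2 : dist y (d':X) < ε/4 := Metric.mem_ball.1 (F.subset d' n' h')
  have hdd : (d:X) = (d':X) := by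
    by_contra hne
    have := hs d d.2 d' d'.2 hne
    have := dist_triangle (d:X) y (d':X)
    rw [dist_comm (d:X) y] at this
    linarith
  have hdd' : d = d' := Subtype.ext hdd
  subst hdd'
  refine ⟨rfl, ?_⟩
  by_contra hne
  exact (Set.disjoint_left.1 (F.disj d n n' hne)) h h'

lemma isClopen_U (hsep : Sep D ε) (f : D → ℕ) : IsClopen (F.U f) := by
  obtain ⟨hε, hs⟩ := hsep
  constructor
  · -- closed
    rw [← closure_subset_iff_isClosed]
    intro y hy
    have hball : y ∈ Metric.ball y (ε/8) := Metric.mem_ball_self (by linarith)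
    have hne : (Metric.ball y (ε/8) ∩ F.U f).Nonempty :=
      _root_.mem_closure_iff.1 hy _ Metric.isOpen_ball hball
    obtain ⟨y₀, hy₀b, hy₀u⟩ := hne
    obtain ⟨d₀, n₀, hn₀, hy₀V⟩ := F.mem_U.1 hy₀u
    -- all of U f near y lies in the fan of d₀
    have hloc : Metric.ball y (ε/8) ∩ F.U f ⊆ ⋃ n ∈ Finset.range (f d₀), F.V d₀ n := by
      rintro z ⟨hzb, hzu⟩
      obtain ⟨d, n, hn, hzV⟩ := F.mem_U.1 hzu
      have e1 : dist z (d:X) < ε/4 := Metric.mem_ball.1 (F.subset d n hzV)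
      have e2 : dist y₀ (d₀:X) < ε/4 := Metric.mem_ball.1 (F.subset d₀ n₀ hy₀V)
      have e3 : dist z y < ε/8 := Metric.mem_ball.1 hzb
      have e4 : dist y₀ y < ε/8 := Metric.mem_ball.1 hy₀b
      have hdd : d = d₀ := by
        by_contra hne
        have hsep' := hs d d.2 d₀ d₀.2 (fun hc => hne (Subtype.ext hc))
        have t1 := dist_triangle (d:X) z y
        have t2 := dist_triangle (d:X) y (d₀:X)
        have t3 := dist_triangle y y₀ (d₀:X)
        rw [dist_comm (d:X) z] at t1
        rw [dist_comm y y₀] at t3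
        linarith
      subst hdd
      exact Set.mem_biUnion (Finset.mem_range.2 hn) hzV
    have hcl : IsClosed (⋃ n ∈ Finset.range (f d₀), F.V d₀ n) :=
      isClosed_biUnion_finset (fun n _ => (F.clopen d₀ n).1)
    have hyy : y ∈ closure (Metric.ball y (ε/8) ∩ F.U f) :=
      Metric.isOpen_ball.inter_closure ⟨hball, hy⟩
    have : y ∈ ⋃ n ∈ Finset.range (f d₀), F.V d₀ n :=
      hcl.closure_subset ((closure_mono hloc) hyy)
    obtain ⟨n, hn, hyV⟩ := Set.mem_iUnion₂.1 this
    exact F.mem_U.2 ⟨d₀, n, Finset.mem_range.1 hn, hyV⟩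
  · exact isOpen_iUnion fun d => isOpen_iUnion fun n => isOpen_iUnion fun _ => (F.clopen d n).2

open Classical in
noncomputable def Phi (hsep : Sep D ε) (f : D → ℕ) : C(X, ZMod 2) where
  toFun := fun y => if y ∈ F.U f then 1 else 0
  continuous_toFun := by
    refine Continuous.if ?_ continuous_const continuous_const
    intro a ha
    rw [show {x | x ∈ F.U f} = F.U f from rfl, (F.isClopen_U hsep f).frontier_eq] at ha
    exact absurd ha (notMem_empty a)

lemma zmod2_cases : ∀ a : ZMod 2, a = 0 ∨ a = 1 := by decide

lemma zmod2_one_ne_zero : (1 : ZMod 2) ≠ 0 := by decide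

open Classical in
lemma phi_apply (hsep : Sep D ε) (f : D → ℕ) (y : X) :
    F.Phi hsep f y = if y ∈ F.U f then 1 else 0 := rfl

lemma phi_eq_one_iff (hsep : Sep D ε) {f : D → ℕ} {y : X} :
    F.Phi hsep f y = 1 ↔ ∃ (d : D) (n : ℕ), n < f d ∧ y ∈ F.V d n := by
  rw [← F.mem_U (f := f), phi_apply]
  by_cases h : y ∈ F.U f
  · simp [h]
  · simp [h, zmod2_one_ne_zero.symm]

lemma phi_eq_zero_iff (hsep : Sep D ε) {f : D → ℕ} {y : X} :
    F.Phi hsep f y = 0 ↔ ¬ ∃ (d : D) (n : ℕ), n < f d ∧ y ∈ F.V d n := by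
  rcases zmod2_cases (F.Phi hsep f y) with h | h
  · rw [h]
    simp only [true_iff]
    rw [← F.phi_eq_one_iff hsep (f := f) (y := y), h]
    exact fun hc => zmod2_one_ne_zero hc.symm
  · rw [h]
    simp only [zmod2_one_ne_zero, false_iff, not_not]
    rw [← F.phi_eq_one_iff hsep (f := f) (y := y)]
    exact h

lemma phi_x_eq_one_iff (hsep : Sep D ε) {f : D → ℕ} {d : D} {n : ℕ} :
    F.Phi hsep f (F.x d n) = 1 ↔ n < f d := by
  rw [F.phi_eq_one_iff hsep]
  constructor
  · rintro ⟨d', n', hn', hmem⟩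
    obtain ⟨rfl, rfl⟩ := F.unique hsep (F.mem d n) hmem
    exact hn'
  · intro h
    exact ⟨d, n, h, F.mem d n⟩

lemma phi_mem_V_eq_one_iff (hsep : Sep D ε) {f : D → ℕ} {d : D} {n : ℕ} {y : X}
    (hy : y ∈ F.V d n) : (F.Phi hsep f y = 1) ↔ n < f d := by
  rw [F.phi_eq_one_iff hsep]
  constructor
  · rintro ⟨d', n', hn', hmem⟩
    obtain ⟨rfl, rfl⟩ := F.unique hsep hy hmem
    exact hn'
  · intro h
    exact ⟨d, n, h, hy⟩

/-- Only finitely many fans meet a compact set. -/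
lemma finite_near (hsep : Sep D ε) {K : Set X} (hK : IsCompact K) :
    {d : D | ∃ y ∈ K, dist y (d:X) < ε/4}.Finite := by
  classical
  obtain ⟨hε, hs⟩ := hsep
  obtain ⟨t, htfin, htsub⟩ := Metric.totallyBounded_iff.1 hK.totallyBounded (ε/8) (by linarith)
  set S := {d : D | ∃ y ∈ K, dist y (d:X) < ε/4} with hS
  have hchoice : ∀ d : D, ∃ p : X × X, d ∈ S →
      p.1 ∈ t ∧ p.2 ∈ K ∧ dist p.2 (d:X) < ε/4 ∧ p.2 ∈ Metric.ball p.1 (ε/8) := by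
    intro d
    by_cases hd : d ∈ S
    · obtain ⟨y, hyK, hyd⟩ := hd
      obtain ⟨c, hc1, hc2⟩ := Set.mem_iUnion₂.1 (htsub hyK)
      exact ⟨(c, y), fun _ => ⟨hc1, hyK, hyd, hc2⟩⟩
    · exact ⟨((d:X), (d:X)), fun h => absurd h hd⟩
  choose p hp using hchoice
  refine Set.Finite.of_finite_image (f := fun d => (p d).1) (htfin.subset ?_) ?_
  · rintro _ ⟨d, hd, rfl⟩
    exact (hp d hd).1
  · intro a ha b hb hab
    by_contra hne
    obtain ⟨-, haK, had, hac⟩ := hp a ha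
    obtain ⟨-, hbK, hbd, hbc⟩ := hp b hb
    have hsepa := hs a a.2 b b.2 (fun hc => hne (Subtype.ext hc))
    have e1 : dist (p a).2 (p a).1 < ε/8 := Metric.mem_ball.1 hac
    have e2 : dist (p b).2 (p b).1 < ε/8 := Metric.mem_ball.1 hbc
    simp only [] at hab
    rw [show (p a).1 = (p b).1 from hab] at e1
    have t1 := dist_triangle (a:X) (p a).2 (b:X)
    have t2 := dist_triangle (p a).2 (p b).2 (b:X)
    have t3 := dist_triangle (p a).2 (p b).1 (p b).2
    rw [dist_comm (a:X) (p a).2] at t1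
    rw [dist_comm (p b).1 (p b).2] at t3
    linarith

end Fan


/-- Neighborhood basis for the compact-open topology with discrete codomain. -/
lemma exists_compact_eqOn {W : Set C(X, ZMod 2)} (hW : IsOpen W) {g : C(X, ZMod 2)}
    (hg : g ∈ W) :
    ∃ K : Set X, IsCompact K ∧ ∀ h : C(X, ZMod 2), (∀ y ∈ K, h y = g y) → h ∈ W := by
  have hb := TopologicalSpace.isTopologicalBasis_of_subbasis
    (ContinuousMap.compactOpen_eq (X := X) (Y := ZMod 2))
  obtain ⟨b, hbmem, hgb, hbW⟩ := hb.exists_subset_of_mem_open hg hW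
  obtain ⟨fam, ⟨hfin, hsub⟩, rfl⟩ := hbmem
  have hKU : ∀ s : fam, ∃ (K : Set X) (U : Set (ZMod 2)),
      IsCompact K ∧ IsOpen U ∧ (s : Set C(X, ZMod 2)) = {f : C(X, ZMod 2) | Set.MapsTo (⇑f) K U} := by
    rintro ⟨s, hs⟩
    obtain ⟨K, hK, U, hU, heq⟩ := hsub hs
    exact ⟨K, U, hK, hU, heq.symm⟩
  choose K U hKcomp hUopen heq using hKU
  haveI : Finite fam := hfin
  refine ⟨⋃ s : fam, K s, isCompact_iUnion hKcomp, ?_⟩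
  intro h hagree
  refine hbW ?_
  rw [Set.mem_sInter]
  intro s hs
  have hgs : g ∈ (s : Set C(X, ZMod 2)) := (Set.mem_sInter.1 hgb) s hs
  rw [show s = {f : C(X, ZMod 2) | Set.MapsTo (⇑f) (K ⟨s, hs⟩) (U ⟨s, hs⟩)} from heq ⟨s, hs⟩]
    at hgs ⊢
  intro y hy
  have : h y = g y := hagree y (Set.mem_iUnion.2 ⟨⟨s, hs⟩, hy⟩)
  rw [this]
  exact hgs hy

namespace Fan

variable {D : Set X} {ε : ℝ} (F : Fan D ε)

/-- Membership in an open set of `C_k(X, ZMod 2)` depends on finitely many coordinates. -/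
lemma cylinder (hsep : Sep D ε) {W : Set C(X, ZMod 2)} (hW : IsOpen W) {f : D → ℕ}
    (hf : F.Phi hsep f ∈ W) :
    ∃ G : Finset D, ∀ f' : D → ℕ, (∀ d ∈ G, f' d = f d) → F.Phi hsep f' ∈ W := by
  classical
  obtain ⟨K, hKcomp, hKspec⟩ := exists_compact_eqOn hW hf
  refine ⟨(finite_near (D := D) (ε := ε) hsep hKcomp).toFinset, ?_⟩
  intro f' hagree
  refine hKspec _ ?_
  intro y hy
  have key : ∀ (fa fb : D → ℕ), (∀ d ∈ (finite_near (D := D) (ε := ε) hsep hKcomp).toFinset, fa d = fb d) →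
      F.Phi hsep fb y = 1 → F.Phi hsep fa y = 1 := by
    intro fa fb hab h1
    obtain ⟨d, n, hn, hyV⟩ := (F.phi_eq_one_iff hsep).1 h1
    have hdS : d ∈ (finite_near (D := D) (ε := ε) hsep hKcomp).toFinset := by
      rw [Set.Finite.mem_toFinset]
      exact ⟨y, hy, Metric.mem_ball.1 (F.subset d n hyV)⟩
    have : fa d = fb d := hab d hdS
    exact (F.phi_eq_one_iff hsep).2 ⟨d, n, by rw [this]; exact hn, hyV⟩
  rcases zmod2_cases (F.Phi hsep f y) with h | h
  · rw [h]
    rcases zmod2_cases (F.Phi hsep f' y) with h' | h'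
    · rw [h']
    · exfalso
      have := key f f' (fun d hd => (hagree d hd).symm) h'
      rw [h] at this
      exact zmod2_one_ne_zero this.symm
  · rw [h]
    exact key f' f hagree h

end Fan


namespace Fan

variable {D : Set X} {ε : ℝ} (F : Fan D ε)

def Hprop (k : ℕ) (f : D → ℕ) : Prop :=
  ∀ n, n ≠ k → ∀ d d' : D, f d = n → f d' = n → d = d'

lemma isClosed_phi_image (hsep : Sep D ε) (k : ℕ) :
    IsClosed (F.Phi hsep '' {f | Hprop k f}) := by
  classical
  refine isClosed_of_closure_subset ?_
  intro z hz
  have approx : ∀ P : Set X, P.Finite →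
      ∃ f : D → ℕ, Hprop k f ∧ ∀ p ∈ P, F.Phi hsep f p = z p := by
    intro P hP
    have hopen : IsOpen {h : C(X, ZMod 2) | ∀ p ∈ P, h p = z p} := by
      have heq : {h : C(X, ZMod 2) | ∀ p ∈ P, h p = z p}
          = ⋂ p ∈ P, {h : C(X, ZMod 2) | Set.MapsTo (⇑h) {p} ({z p} : Set (ZMod 2))} := by
        ext h
        simp [Set.MapsTo]
      rw [heq]
      exact hP.isOpen_biInter fun p _ =>
        ContinuousMap.isOpen_setOf_mapsTo isCompact_singleton (isOpen_discrete _)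
    obtain ⟨w, hw1, hw2⟩ := _root_.mem_closure_iff.1 hz _ hopen (fun p _ => rfl)
    obtain ⟨f, hf, rfl⟩ := hw2
    exact ⟨f, hf, hw1⟩
  have hzD : ∀ d : D, z (d : X) = 0 := by
    intro d
    obtain ⟨f, hf, hfp⟩ := approx {(d:X)} (finite_singleton _)
    rw [← hfp _ (mem_singleton _)]
    rw [F.phi_eq_zero_iff hsep]
    rintro ⟨d', n', hn', hmem⟩
    by_cases hdd : d = d'
    · subst hdd
      exact F.not_mem d n' hmem
    · have h1 : dist (d:X) (d':X) < ε/4 := Metric.mem_ball.1 (F.subset d' n' hmem)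
      have h2 := hsep.2 d d.2 d' d'.2 (fun hc => hdd (Subtype.ext hc))
      have := hsep.1
      linarith
  have hfind : ∀ d : D, ∃ n, z (F.x d n) = 0 := by
    intro d
    have hop : IsOpen {y : X | z y = 0} := by
      have : {y : X | z y = 0} = ⇑z ⁻¹' {0} := rfl
      rw [this]
      exact (isOpen_discrete _).preimage z.continuous
    have h0 : {y : X | z y = 0} ∈ 𝓝 (d:X) := hop.mem_nhds (hzD d)
    exact ((F.tendsto d).eventually (Filter.eventually_of_mem h0 (fun y hy => hy))).exists
  set f₀ : D → ℕ := fun d => Nat.find (hfind d) with hf₀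
  have hone : ∀ (d : D) (n : ℕ), z (F.x d n) = 1 ↔ n < f₀ d := by
    intro d n
    constructor
    · intro h1
      by_contra hnot
      push_neg at hnot
      have h0 : z (F.x d (f₀ d)) = 0 := Nat.find_spec (hfind d)
      obtain ⟨f, hf, hfp⟩ := approx {F.x d n, F.x d (f₀ d)}
        ((finite_singleton _).insert _)
      have e1 : F.Phi hsep f (F.x d n) = 1 := by
        rw [hfp _ (by simp)]; exact h1
      have e0 : F.Phi hsep f (F.x d (f₀ d)) = 0 := by
        rw [hfp _ (by simp)]; exact h0
      have l1 : n < f d := (F.phi_x_eq_one_iff hsep).1 e1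
      have l0 : ¬ (f₀ d < f d) := by
        intro hc
        have := (F.phi_x_eq_one_iff hsep).2 hc
        rw [this] at e0
        exact zmod2_one_ne_zero e0
      omega
    · intro hn
      have hmin := Nat.find_min (hfind d) hn
      rcases zmod2_cases (z (F.x d n)) with h | h
      · exact absurd h hmin
      · exact h
  have hcmp : ∀ a b : ZMod 2, (a = 1 ↔ b = 1) → a = b := by decide
  have hVconst : ∀ (d : D) (n : ℕ) (y : X), y ∈ F.V d n → z y = z (F.x d n) := by
    intro d n y hy
    obtain ⟨f, hf, hfp⟩ := approx {y, F.x d n} ((finite_singleton _).insert _)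
    rw [← hfp y (by simp), ← hfp (F.x d n) (by simp)]
    apply hcmp
    rw [F.phi_mem_V_eq_one_iff hsep hy, F.phi_x_eq_one_iff hsep]
  have hzero : ∀ y : X, (¬ ∃ (d : D) (n : ℕ), y ∈ F.V d n) → z y = 0 := by
    intro y hy
    obtain ⟨f, hf, hfp⟩ := approx {y} (finite_singleton _)
    rw [← hfp y (mem_singleton _), F.phi_eq_zero_iff hsep]
    rintro ⟨d, n, hn, hmem⟩
    exact hy ⟨d, n, hmem⟩
  refine ⟨f₀, ?_, ?_⟩
  · intro n hnk d d' hd hd'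
    by_contra hne
    set P : Set X := ((fun j => F.x d j) '' Set.Iic n) ∪ ((fun j => F.x d' j) '' Set.Iic n)
      with hP
    obtain ⟨f, hf, hfp⟩ := approx P
      (((Set.finite_Iic n).image _).union ((Set.finite_Iic n).image _))
    have key : ∀ (e : D), f₀ e = n → (∀ j ≤ n, F.x e j ∈ P) → f e = n := by
      intro e he hmem
      have hub : ¬ n < f e := by
        intro hc
        have h1 := (F.phi_x_eq_one_iff hsep (f := f) (d := e) (n := n)).2 hc
        rw [hfp (F.x e n) (hmem n le_rfl)] at h1
        have := (hone e n).1 h1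
        omega
      have hlb : ∀ j, j < n → j < f e := by
        intro j hj
        have hz1 : z (F.x e j) = 1 := (hone e j).2 (by omega)
        have h2 := hfp (F.x e j) (hmem j (le_of_lt hj))
        rw [hz1] at h2
        exact (F.phi_x_eq_one_iff hsep).1 h2
      rcases Nat.lt_or_ge (f e) n with h | h
      · exact absurd (hlb _ h) (lt_irrefl _)
      · omega
    have hfd : f d = n := key d hd (fun j hj => Set.mem_union_left _ ⟨j, hj, rfl⟩)
    have hfd' : f d' = n := key d' hd' (fun j hj => Set.mem_union_right _ ⟨j, hj, rfl⟩)
    exact hne (hf n hnk d d' hfd hfd')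
  · refine ContinuousMap.ext fun y => ?_
    by_cases hy : ∃ (d : D) (n : ℕ), y ∈ F.V d n
    · obtain ⟨d, n, hmem⟩ := hy
      apply hcmp
      rw [F.phi_mem_V_eq_one_iff hsep hmem, hVconst d n y hmem, hone]
    · rw [hzero y hy, F.phi_eq_zero_iff hsep]
      rintro ⟨d, n, hn, hmem⟩
      exact hy ⟨d, n, hmem⟩

lemma disjoint_phi_images (hsep : Sep D ε) (hunc : ¬ D.Countable) :
    Disjoint (F.Phi hsep '' {f | Hprop 1 f}) (F.Phi hsep '' {f | Hprop 2 f}) := by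
  rw [Set.disjoint_left]
  rintro a ⟨f, hf1, rfl⟩ ⟨f', hf2, heq⟩
  have hff : f' = f := by
    funext d
    have hiff : ∀ n, n < f' d ↔ n < f d := by
      intro n
      rw [← F.phi_x_eq_one_iff hsep (f := f) (d := d) (n := n),
        ← F.phi_x_eq_one_iff hsep (f := f') (d := d) (n := n), heq]
    have h1 : ¬ f' d < f' d := lt_irrefl _
    have h2 : ¬ f d < f d := lt_irrefl _
    rcases Nat.lt_or_ge (f' d) (f d) with h | h
    · exact absurd ((hiff (f' d)).2 h) h1
    · rcases Nat.lt_or_ge (f d) (f' d) with h' | h'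
      · exact absurd ((hiff (f d)).1 h') h2
      · omega
  subst hff
  apply hunc
  have hsub : ∀ n : ℕ, {d : D | f' d = n}.Subsingleton := by
    intro n d hd d' hd'
    by_cases h1 : n = 1
    · exact hf2 n (by omega) d d' hd hd'
    · exact hf1 n h1 d d' hd hd'
  have huniv : (Set.univ : Set D).Countable := by
    have : (Set.univ : Set D) = ⋃ n : ℕ, {d : D | f' d = n} := by
      ext d
      simp
    rw [this]
    exact countable_iUnion fun n => (hsub n).countable
  have : Countable D := Set.countable_univ_iff.mp huniv
  exact Set.countable_coe_iff.mpr this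

end Fan

section Stone

variable {ι α : Type*}

def HP (k : ℕ) (f : ι → ℕ) : Prop :=
  ∀ n, n ≠ k → ∀ d d' : ι, f d = n → f d' = n → d = d'

def StInv (Phi : (ι → ℕ) → α) (U : Set α) (q : Finset ι × Finset ι × (ι → ℕ) × ℕ)
    [DecidableEq ι] : Prop :=
  q.1 ⊆ q.2.1 ∧ (∀ d ∈ q.2.1, 3 ≤ q.2.2.1 d ∧ q.2.2.1 d < q.2.2.2) ∧
  Set.InjOn q.2.2.1 ↑q.2.1 ∧
  ∀ f' : ι → ℕ, (∀ d ∈ q.2.1, f' d = if d ∈ q.1 then q.2.2.1 d else 1) → Phi f' ∈ U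

variable [DecidableEq ι]

lemma hp1_of_inv {Phi : (ι → ℕ) → α} {U : Set α} {q} (h : StInv Phi U q) :
    HP 1 (fun d => if d ∈ q.2.1 then q.2.2.1 d else 1) := by
  intro n hn d d' hd hd'
  simp only at hd hd'
  by_cases h1 : d ∈ q.2.1
  · by_cases h2 : d' ∈ q.2.1
    · rw [if_pos h1] at hd
      rw [if_pos h2] at hd'
      exact h.2.2.1 (Finset.mem_coe.2 h1) (Finset.mem_coe.2 h2) (by rw [hd, hd'])
    · rw [if_neg h2] at hd'
      exact absurd hd'.symm hn
  · rw [if_neg h1] at hd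
    exact absurd hd.symm hn

noncomputable def stoneStep (Phi : (ι → ℕ) → α) (U : Set α)
    (hU : ∀ f, HP 1 f → Phi f ∈ U)
    (cylU : ∀ f, Phi f ∈ U → ∃ G : Finset ι, ∀ f', (∀ d ∈ G, f' d = f d) → Phi f' ∈ U)
    (s : {q : Finset ι × Finset ι × (ι → ℕ) × ℕ // StInv Phi U q}) :
    {q : Finset ι × Finset ι × (ι → ℕ) × ℕ // StInv Phi U q} :=
  ⟨(s.1.2.1,
    s.1.2.1 ∪ (cylU _ (hU _ (hp1_of_inv s.2))).choose,
    fun d => if d ∈ s.1.2.1 then s.1.2.2.1 d else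
      if hd : d ∈ (cylU _ (hU _ (hp1_of_inv s.2))).choose \ s.1.2.1 then
        s.1.2.2.2 + 3 +
          ((Fintype.equivFin ((cylU _ (hU _ (hp1_of_inv s.2))).choose \ s.1.2.1 : Finset ι))
            ⟨d, hd⟩ : ℕ)
      else 0,
    s.1.2.2.2 + 3 + ((cylU _ (hU _ (hp1_of_inv s.2))).choose \ s.1.2.1).card), by
    dsimp only [StInv]
    obtain ⟨hsub, hbd, hinj, hgu⟩ := s.2
    set G := (cylU _ (hU _ (hp1_of_inv s.2))).choose with hG
    set T : Finset ι := G \ s.1.2.1 with hT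
    have hcard : ∀ hd : _, ((Fintype.equivFin (T : Finset ι)) hd : ℕ) < T.card := by
      intro hd
      have := (Fintype.equivFin (T : Finset ι) hd).2
      simpa [Fintype.card_coe] using this
    refine ⟨Finset.subset_union_left, ?_, ?_, ?_⟩
    · intro d hd
      rcases Finset.mem_union.1 hd with h | h
      · rw [if_pos h]
        exact ⟨(hbd d h).1, by have := (hbd d h).2; omega⟩
      · by_cases h1 : d ∈ s.1.2.1
        · rw [if_pos h1]
          exact ⟨(hbd d h1).1, by have := (hbd d h1).2; omega⟩
        · have hdT : d ∈ T := Finset.mem_sdiff.2 ⟨h, h1⟩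
          rw [if_neg h1, dif_pos hdT]
          refine ⟨by omega, ?_⟩
          have := hcard ⟨d, hdT⟩
          omega
    · intro d hd d' hd' heq
      simp only at heq
      rw [Finset.mem_coe, Finset.mem_union] at hd hd'
      by_cases h1 : d ∈ s.1.2.1
      · by_cases h2 : d' ∈ s.1.2.1
        · rw [if_pos h1, if_pos h2] at heq
          exact hinj (Finset.mem_coe.2 h1) (Finset.mem_coe.2 h2) heq
        · exfalso
          have hdT : d' ∈ T := Finset.mem_sdiff.2 ⟨hd'.resolve_left h2, h2⟩
          rw [if_pos h1, if_neg h2, dif_pos hdT] at heq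
          have := (hbd d h1).2
          omega
      · by_cases h2 : d' ∈ s.1.2.1
        · exfalso
          have hdT : d ∈ T := Finset.mem_sdiff.2 ⟨hd.resolve_left h1, h1⟩
          rw [if_neg h1, if_pos h2, dif_pos hdT] at heq
          have := (hbd d' h2).2
          omega
        · have hdT : d ∈ T := Finset.mem_sdiff.2 ⟨hd.resolve_left h1, h1⟩
          have hdT' : d' ∈ T := Finset.mem_sdiff.2 ⟨hd'.resolve_left h2, h2⟩
          rw [if_neg h1, dif_pos hdT, if_neg h2, dif_pos hdT'] at heq
          have heq2 : ((Fintype.equivFin (T : Finset ι)) ⟨d, hdT⟩ : ℕ)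
              = ((Fintype.equivFin (T : Finset ι)) ⟨d', hdT'⟩ : ℕ) := by omega
          have := (Fintype.equivFin (T : Finset ι)).injective (Fin.ext heq2)
          exact congrArg Subtype.val this
    · intro f' hf'
      apply (cylU _ (hU _ (hp1_of_inv s.2))).choose_spec f'
      intro d hdG
      have hdu : d ∈ s.1.2.1 ∪ G := Finset.mem_union_right _ hdG
      have := hf' d hdu
      by_cases h1 : d ∈ s.1.2.1
      · rw [if_pos h1, if_pos h1] at this
        rw [this, if_pos h1]
      · rw [if_neg h1] at this
        rw [this, if_neg h1]⟩

lemma abstract_stone (Phi : (ι → ℕ) → α) (U V : Set α)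
    (hU : ∀ f, HP 1 f → Phi f ∈ U) (hV : ∀ f, HP 2 f → Phi f ∈ V)
    (cylU : ∀ f, Phi f ∈ U → ∃ G : Finset ι, ∀ f', (∀ d ∈ G, f' d = f d) → Phi f' ∈ U)
    (cylV : ∀ f, Phi f ∈ V → ∃ G : Finset ι, ∀ f', (∀ d ∈ G, f' d = f d) → Phi f' ∈ V)
    (hdisj : Disjoint U V) : False := by
  classical
  -- the base state
  have h1const : HP 1 (fun _ : ι => 1) := by
    intro n hn d d' hd _
    exact absurd hd.symm hn
  have hc1 : Phi (fun _ : ι => 1) ∈ U := hU _ h1const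
  set G₀ : Finset ι := (cylU _ hc1).choose with hG₀
  have hcard₀ : ∀ hd : _, ((Fintype.equivFin (G₀ : Finset ι)) hd : ℕ) < G₀.card := by
    intro hd
    have := (Fintype.equivFin (G₀ : Finset ι) hd).2
    simpa [Fintype.card_coe] using this
  have hinv0 : StInv Phi U (∅, G₀,
      fun d => if hd : d ∈ G₀ then 3 + ((Fintype.equivFin (G₀ : Finset ι)) ⟨d, hd⟩ : ℕ) else 0,
      3 + G₀.card) := by
    dsimp only [StInv]
    refine ⟨Finset.empty_subset _, ?_, ?_, ?_⟩
    · intro d hd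
      rw [dif_pos hd]
      exact ⟨by omega, by have := hcard₀ ⟨d, hd⟩; omega⟩
    · intro d hd d' hd' heq
      rw [Finset.mem_coe] at hd hd'
      simp only at heq
      rw [dif_pos hd, dif_pos hd'] at heq
      have heq2 : ((Fintype.equivFin (G₀ : Finset ι)) ⟨d, hd⟩ : ℕ)
          = ((Fintype.equivFin (G₀ : Finset ι)) ⟨d', hd'⟩ : ℕ) := by omega
      exact congrArg Subtype.val ((Fintype.equivFin (G₀ : Finset ι)).injective (Fin.ext heq2))
    · intro f' hf'
      apply (cylU _ hc1).choose_spec f'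
      intro d hd
      have := hf' d hd
      rw [if_neg (Finset.notMem_empty d)] at this
      exact this
  set seq : ℕ → {q : Finset ι × Finset ι × (ι → ℕ) × ℕ // StInv Phi U q} :=
    fun n => Nat.rec ⟨_, hinv0⟩ (fun _ s => stoneStep Phi U hU cylU s) n with hseq
  have hstep : ∀ n, seq (n+1) = stoneStep Phi U hU cylU (seq n) := fun n => rfl
  have link1 : ∀ n, (seq (n+1)).1.1 = (seq n).1.2.1 := fun n => rfl
  have link2 : ∀ n, (seq n).1.2.1 ⊆ (seq (n+1)).1.2.1 := by
    intro n
    rw [hstep n]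
    exact Finset.subset_union_left
  have link3 : ∀ n, ∀ d ∈ (seq n).1.2.1, (seq (n+1)).1.2.2.1 d = (seq n).1.2.2.1 d := by
    intro n d hd
    rw [hstep n]
    exact if_pos hd
  have mono : ∀ k l, k ≤ l → (seq k).1.2.1 ⊆ (seq l).1.2.1 := by
    intro k l hkl
    induction l, hkl using Nat.le_induction with
    | base => exact subset_rfl
    | succ l hkl ih => exact ih.trans (link2 l)
  have stable : ∀ k l, k ≤ l → ∀ d ∈ (seq k).1.2.1, (seq l).1.2.2.1 d = (seq k).1.2.2.1 d := by
    intro k l hkl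
    induction l, hkl using Nat.le_induction with
    | base => intro d _; rfl
    | succ l hkl ih =>
      intro d hd
      rw [link3 l d (mono k l hkl hd)]
      exact ih d hd
  set g : ι → ℕ := fun d =>
    if h : ∃ k, d ∈ (seq k).1.2.1 then (seq (Nat.find h)).1.2.2.1 d else 2 with hg
  have gspec : ∀ k, ∀ d ∈ (seq k).1.2.1, g d = (seq k).1.2.2.1 d := by
    intro k d hd
    have hex : ∃ j, d ∈ (seq j).1.2.1 := ⟨k, hd⟩
    rw [hg]
    simp only
    rw [dif_pos hex]
    exact (stable (Nat.find hex) k (Nat.find_min' hex hd) d (Nat.find_spec hex)).symm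
  have hg2 : HP 2 g := by
    intro n hn d d' hd hd'
    by_cases h1 : ∃ k, d ∈ (seq k).1.2.1
    · by_cases h2 : ∃ k, d' ∈ (seq k).1.2.1
      · obtain ⟨k1, hk1⟩ := h1
        obtain ⟨k2, hk2⟩ := h2
        have hk1' : d ∈ (seq (max k1 k2)).1.2.1 := mono k1 _ (le_max_left _ _) hk1
        have hk2' : d' ∈ (seq (max k1 k2)).1.2.1 := mono k2 _ (le_max_right _ _) hk2
        rw [gspec _ d hk1'] at hd
        rw [gspec _ d' hk2'] at hd'
        exact (seq (max k1 k2)).2.2.2.1 (Finset.mem_coe.2 hk1') (Finset.mem_coe.2 hk2')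
          (by rw [hd, hd'])
      · rw [hg] at hd'
        simp only at hd'
        rw [dif_neg h2] at hd'
        exact absurd hd'.symm hn
    · rw [hg] at hd
      simp only at hd
      rw [dif_neg h1] at hd
      exact absurd hd.symm hn
  have hVg : Phi g ∈ V := hV g hg2
  set E : Finset ι := (cylV g hVg).choose with hE
  set kstar : ℕ := E.sup (fun d => if h : ∃ k, d ∈ (seq k).1.2.1 then Nat.find h else 0)
    with hkstar
  have hEF : ∀ d ∈ E, (∃ k, d ∈ (seq k).1.2.1) → d ∈ (seq kstar).1.2.1 := by
    intro d hd hex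
    have h1 : Nat.find hex ≤ kstar := by
      have : (fun d => if h : ∃ k, d ∈ (seq k).1.2.1 then Nat.find h else 0) d
          = Nat.find hex := dif_pos hex
      rw [← this, hkstar]
      exact Finset.le_sup (f := fun d => if h : ∃ k, d ∈ (seq k).1.2.1 then Nat.find h else 0) hd
    exact mono _ _ h1 (Nat.find_spec hex)
  set hstar : ι → ℕ := fun d => if d ∈ (seq (kstar+1)).1.2.1 then
      (if d ∈ (seq kstar).1.2.1 then (seq kstar).1.2.2.1 d else 1) else g d with hhstar
  have hUstar : Phi hstar ∈ U := by
    apply (seq (kstar+1)).2.2.2.2 hstar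
    intro d hd
    rw [link1 kstar]
    rw [hhstar]
    simp only
    rw [if_pos hd]
    by_cases h : d ∈ (seq kstar).1.2.1
    · rw [if_pos h, if_pos h]
      exact (link3 kstar d h).symm
    · rw [if_neg h, if_neg h]
  have hVstar : Phi hstar ∈ V := by
    apply (cylV g hVg).choose_spec hstar
    intro d hd
    rw [hhstar]
    simp only
    by_cases h : d ∈ (seq (kstar+1)).1.2.1
    · have hex : ∃ k, d ∈ (seq k).1.2.1 := ⟨kstar+1, h⟩
      have hdk : d ∈ (seq kstar).1.2.1 := hEF d hd hex
      rw [if_pos h, if_pos hdk]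
      exact (gspec kstar d hdk).symm
    · rw [if_neg h]
  exact Set.disjoint_left.1 hdisj hUstar hVstar

end Stone

end Statement12Aux

open Statement12Aux

/-- If `X` is a zero-dimensional metric space such that `C_k(X, 2)` (the
continuous `ℤ/2`-valued functions with the compact-open topology) is normal, then the derived
set of `X` (the set of non-isolated points) is separable. -/
theorem statement12 {X : Type*} [MetricSpace X]
    (hzd : TopologicalSpace.IsTopologicalBasis {s : Set X | IsClopen s})
    (hn : NormalSpace C(X, ZMod 2)) :
    TopologicalSpace.IsSeparable {x : X | (𝓝[≠] x).NeBot} := by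
  classical
  by_contra hns
  have hcon : ¬ ∀ ε : ℝ, 0 < ε → ∀ D : Set X, D ⊆ {x : X | (𝓝[≠] x).NeBot} →
      (∀ d ∈ D, ∀ d' ∈ D, d ≠ d' → ε ≤ dist d d') → D.Countable := fun h =>
    hns (isSeparable_of_countable_separated h)
  push_neg at hcon
  obtain ⟨ε, hε, D, hDsub, hDsep, hDunc⟩ := hcon
  obtain ⟨F⟩ := exists_fan hzd (fun d hd => hDsub hd) hε
  have hsep : Fan.Sep D ε := ⟨hε, hDsep⟩
  have hcl1 := F.isClosed_phi_image hsep 1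
  have hcl2 := F.isClosed_phi_image hsep 2
  have hdisj := F.disjoint_phi_images hsep hDunc
  obtain ⟨U, V, hUo, hVo, hsubU, hsubV, hUV⟩ := hn.normal _ _ hcl1 hcl2 hdisj
  refine abstract_stone (ι := D) (F.Phi hsep) U V ?_ ?_ ?_ ?_ hUV
  · intro f hf
    exact hsubU ⟨f, hf, rfl⟩
  · intro f hf
    exact hsubV ⟨f, hf, rfl⟩
  · intro f hf
    exact F.cylinder hsep hUo hf
  · intro f hf
    exact F.cylinder hsep hVo hf
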